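/- Let B ≥ 2, let m ≥ 1, and let (θ_p, φ_p, χ_p) ∈ [0,π]×[0,2π)×[0,2π), p = 1,…,m, be sampling points such that all columns of the Wigner-D sensing matrix A ∈ ℂ^{m×N}, N = B(2B−1)(2B+1)/3, are nonzero. Suppose there exist integers k, n with |k|, |n| ≤ B−1 and (k,n) ≠ (0,0) such that 2nχ_i + 2kφ_i ≡ 2nχ_j + 2kφ_j (mod 2π) for all i, j ∈ {1,…,m}. Then the mutual coherence of A attains its maximum: μ(A) = 1. -/

import Mathlib

open scoped Real BigOperators

/-- Associated Legendre polynomial `P_l^k(x)` for integer order `k` (possibly negative). -/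
noncomputable def assocLegendre (l : ℕ) (k : ℤ) (x : ℝ) : ℝ :=
  ((-1 : ℝ) ^ k / (2 ^ l * (Nat.factorial l : ℝ))) * (1 - x ^ 2) ^ ((k : ℝ) / 2) *
    iteratedDeriv (k + (l : ℤ)).toNat (fun y : ℝ => (y ^ 2 - 1) ^ l) x

/-- Normalization factor of spherical harmonics. -/
noncomputable def shNormFactor (l : ℕ) (k : ℤ) : ℝ :=
  Real.sqrt ((2 * (l : ℝ) + 1) / (4 * Real.pi) *
    ((Nat.factorial ((l : ℤ) - k).toNat : ℝ) / (Nat.factorial ((l : ℤ) + k).toNat : ℝ)))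

/-- Spherical harmonic `Y_l^k(θ,φ)`. -/
noncomputable def sphericalHarmonic (l : ℕ) (k : ℤ) (θ φ : ℝ) : ℂ :=
  ((shNormFactor l k * assocLegendre l k (Real.cos θ) : ℝ) : ℂ) *
    Complex.exp (Complex.I * (k : ℂ) * (φ : ℂ))

/-- Jacobi polynomial `P_α^{(ξ,λ)}(x)`. -/
noncomputable def jacobiP (a ξ lam : ℕ) (x : ℝ) : ℝ :=
  ((-1 : ℝ) ^ a / (2 ^ a * (Nat.factorial a : ℝ))) * (1 - x) ^ (-(ξ : ℤ)) *
    (1 + x) ^ (-(lam : ℤ)) *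
    iteratedDeriv a (fun y : ℝ => (1 - y) ^ ξ * (1 + y) ^ lam * (1 - y ^ 2) ^ a) x

/-- The coefficient `γ = α!(α+ξ+λ)!/((α+ξ)!(α+λ)!)`. -/
noncomputable def jacobiGamma (a ξ lam : ℕ) : ℝ :=
  ((Nat.factorial a : ℝ) * (Nat.factorial (a + ξ + lam) : ℝ)) /
    ((Nat.factorial (a + ξ) : ℝ) * (Nat.factorial (a + lam) : ℝ))

/-- Wigner d-function `d_l^{k,n}(cos θ)` (as a function of `θ`). -/
noncomputable def wignerd (l : ℕ) (k n : ℤ) (θ : ℝ) : ℝ :=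
  let ξ : ℕ := (k - n).natAbs
  let lam : ℕ := (k + n).natAbs
  let a : ℕ := l - (ξ + lam) / 2
  let ω : ℝ := if k ≤ n then 1 else (-1 : ℝ) ^ (n - k)
  ω * Real.sqrt (jacobiGamma a ξ lam) * (Real.sin (θ / 2)) ^ ξ * (Real.cos (θ / 2)) ^ lam *
    jacobiP a ξ lam (Real.cos θ)

/-- Wigner D-function `D_l^{k,n}(θ,φ,χ)`. -/
noncomputable def wignerD (l : ℕ) (k n : ℤ) (θ φ χ : ℝ) : ℂ :=
  ((Real.sqrt ((2 * (l : ℝ) + 1) / (8 * Real.pi ^ 2)) : ℝ) : ℂ) *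
    Complex.exp (-(Complex.I * (k : ℂ) * (φ : ℂ))) * ((wignerd l k n θ : ℝ) : ℂ) *
    Complex.exp (-(Complex.I * (n : ℂ) * (χ : ℂ)))

/-- Column index set for the spherical-harmonic sensing matrix: pairs `(l,k)`,
`0 ≤ l ≤ B-1`, `-l ≤ k ≤ l`.  It has `B^2` elements. -/
abbrev SHIndex (B : ℕ) := Σ l : Fin B, ↥(Set.Icc (-(l.1 : ℤ)) (l.1 : ℤ))

/-- Column index set for the Wigner-D sensing matrix: triples `(l,k,n)`,
`0 ≤ l ≤ B-1`, `-l ≤ k,n ≤ l`.  It has `B(2B-1)(2B+1)/3` elements. -/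
abbrev WDIndex (B : ℕ) :=
  Σ l : Fin B, ↥(Set.Icc (-(l.1 : ℤ)) (l.1 : ℤ)) × ↥(Set.Icc (-(l.1 : ℤ)) (l.1 : ℤ))

/-- The spherical-harmonic sensing matrix. -/
noncomputable def shMatrix {m : ℕ} (B : ℕ) (θ φ : Fin m → ℝ) :
    Matrix (Fin m) (SHIndex B) ℂ :=
  fun p i => sphericalHarmonic i.1.1 i.2.1 (θ p) (φ p)

/-- The Wigner-D sensing matrix. -/
noncomputable def wdMatrix {m : ℕ} (B : ℕ) (θ φ χ : Fin m → ℝ) :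
    Matrix (Fin m) (WDIndex B) ℂ :=
  fun p i => wignerD i.1.1 i.2.1.1 i.2.2.1 (θ p) (φ p) (χ p)

/-- Mutual coherence of a matrix: the supremum over pairs of distinct columns of the
normalized absolute inner product. -/
noncomputable def mutualCoherence {m : ℕ} {ι : Type*} (A : Matrix (Fin m) ι ℂ) : ℝ :=
  sSup {x : ℝ | ∃ i j : ι, i ≠ j ∧
    x = ‖∑ p, (starRingEnd ℂ) (A p i) * A p j‖ /
        (Real.sqrt (∑ p, Complex.normSq (A p i)) * Real.sqrt (∑ p, Complex.normSq (A p j)))}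


lemma neg_one_zpow_abs (z : ℤ) : |(-1:ℝ)^z| = 1 := by
  rcases Int.even_or_odd z with h | h
  · rw [h.neg_one_zpow]; norm_num
  · rw [h.neg_one_zpow]; norm_num

lemma neg_one_zpow_sq (z : ℤ) : ((-1:ℝ)^z) * ((-1:ℝ)^z) = 1 := by
  rw [← zpow_add₀ (by norm_num : (-1:ℝ) ≠ 0)]
  exact Even.neg_one_zpow ⟨z, rfl⟩

lemma wignerd_neg (l : ℕ) (k n : ℤ) :
    ∃ ε : ℝ, |ε| = 1 ∧ ∀ θ : ℝ, wignerd l (-k) (-n) θ = ε * wignerd l k n θ := by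
  have hξ : (-k - -n).natAbs = (k - n).natAbs := by omega
  have hlam : (-k + -n).natAbs = (k + n).natAbs := by omega
  set ω : ℝ := if k ≤ n then 1 else (-1:ℝ)^(n-k) with hω
  set ω' : ℝ := if -k ≤ -n then 1 else (-1:ℝ)^(-n - -k) with hω'
  have hωa : |ω| = 1 := by rw [hω]; split <;> simp [neg_one_zpow_abs]
  have hω'a : |ω'| = 1 := by rw [hω']; split <;> simp [neg_one_zpow_abs]
  have hω2 : ω * ω = 1 := by
    rw [hω]; split
    · norm_num
    · exact neg_one_zpow_sq _
  refine ⟨ω' * ω, by rw [abs_mul, hωa, hω'a, mul_one], fun θ => ?_⟩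
  simp only [wignerd, hξ, hlam]
  rw [← hω, ← hω']
  linear_combination (-ω' * Real.sqrt (jacobiGamma (l - ((k-n).natAbs + (k+n).natAbs)/2) (k-n).natAbs (k+n).natAbs) * (Real.sin (θ/2))^((k-n).natAbs) * (Real.cos (θ/2))^((k+n).natAbs) * jacobiP (l - ((k-n).natAbs + (k+n).natAbs)/2) (k-n).natAbs (k+n).natAbs (Real.cos θ)) * hω2

lemma wignerD_eq (l : ℕ) (k n : ℤ) (θ φ χ : ℝ) :
    wignerD l k n θ φ χ =
      ((Real.sqrt ((2 * (l : ℝ) + 1) / (8 * Real.pi ^ 2)) * wignerd l k n θ : ℝ) : ℂ) *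
        Complex.exp (Complex.I * ((-((k:ℝ) * φ + (n:ℝ) * χ) : ℝ) : ℂ)) := by
  rw [wignerD, show ∀ a b c d : ℂ, a * b * c * d = (a * c) * (b * d) from fun a b c d => by ring,
    ← Complex.exp_add]
  push_cast
  ring_nf

lemma normSq_exp_I_mul (x : ℝ) : Complex.normSq (Complex.exp (Complex.I * (x:ℝ))) = 1 := by
  rw [Complex.normSq_eq_norm_sq, mul_comm, Complex.norm_exp_ofReal_mul_I]
  norm_num

lemma normSq_wignerD (l : ℕ) (k n : ℤ) (θ φ χ : ℝ) :
    Complex.normSq (wignerD l k n θ φ χ) =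
      Real.sqrt ((2 * (l : ℝ) + 1) / (8 * Real.pi ^ 2)) ^ 2 * wignerd l k n θ ^ 2 := by
  rw [wignerD_eq, Complex.normSq_mul, Complex.normSq_ofReal, normSq_exp_I_mul]
  ring

lemma ratio_le_one {m : ℕ} (a b : Fin m → ℂ) :
    ‖∑ p, (starRingEnd ℂ) (a p) * b p‖ /
      (Real.sqrt (∑ p, Complex.normSq (a p)) * Real.sqrt (∑ p, Complex.normSq (b p))) ≤ 1 := by
  set v : EuclideanSpace ℂ (Fin m) := WithLp.toLp 2 a
  set w : EuclideanSpace ℂ (Fin m) := WithLp.toLp 2 b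
  have hin : (inner ℂ v w : ℂ) = ∑ p, (starRingEnd ℂ) (a p) * b p := by
    simp [PiLp.inner_apply, RCLike.inner_apply, v, w, mul_comm]
  have hnv : ‖v‖ = Real.sqrt (∑ p, Complex.normSq (a p)) := by
    rw [EuclideanSpace.norm_eq]
    congr 1
    exact Finset.sum_congr rfl fun p _ => by rw [← Complex.sq_norm]
  have hnw : ‖w‖ = Real.sqrt (∑ p, Complex.normSq (b p)) := by
    rw [EuclideanSpace.norm_eq]
    congr 1
    exact Finset.sum_congr rfl fun p _ => by rw [← Complex.sq_norm]
  have hcs := norm_inner_le_norm (𝕜 := ℂ) v w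
  rw [hin, hnv, hnw] at hcs
  exact div_le_one_of_le₀ hcs (by positivity)

/-- if the azimuth/polarization samples satisfy
`2nχ_i + 2kφ_i ≡ 2nχ_j + 2kφ_j (mod 2π)` for some orders `|k|,|n| ≤ B-1`, `(k,n) ≠ (0,0)`,
then the Wigner-D sensing matrix has mutual coherence `1`. -/
theorem wdMatrix_full_coherence (B m : ℕ) (hB : 2 ≤ B) (hm : 1 ≤ m)
    (θ φ χ : Fin m → ℝ)
    (hθ : ∀ p, θ p ∈ Set.Icc 0 Real.pi) (hφ : ∀ p, φ p ∈ Set.Ico 0 (2 * Real.pi))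
    (hχ : ∀ p, χ p ∈ Set.Ico 0 (2 * Real.pi))
    (hcols : ∀ i : WDIndex B, ∃ p, wdMatrix B θ φ χ p i ≠ 0)
    (k n : ℤ) (hk : k.natAbs ≤ B - 1) (hn : n.natAbs ≤ B - 1) (hkn : (k, n) ≠ (0, 0))
    (hmod : ∀ i j : Fin m, ∃ t : ℤ,
      (2 * (n : ℝ) * χ i + 2 * (k : ℝ) * φ i) - (2 * (n : ℝ) * χ j + 2 * (k : ℝ) * φ j) =
        t * (2 * Real.pi)) :
    mutualCoherence (wdMatrix B θ φ χ) = 1 := by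
  set A := wdMatrix B θ φ χ with hA
  set L : ℕ := B - 1 with hL
  have hB1 : L < B := by omega
  have hkIcc : k ∈ Set.Icc (-(L:ℤ)) (L:ℤ) := by simp only [Set.mem_Icc]; omega
  have hnIcc : n ∈ Set.Icc (-(L:ℤ)) (L:ℤ) := by simp only [Set.mem_Icc]; omega
  have hkIcc' : -k ∈ Set.Icc (-(L:ℤ)) (L:ℤ) := by simp only [Set.mem_Icc]; omega
  have hnIcc' : -n ∈ Set.Icc (-(L:ℤ)) (L:ℤ) := by simp only [Set.mem_Icc]; omega
  set i0 : WDIndex B := ⟨⟨L, hB1⟩, ⟨⟨k, hkIcc⟩, ⟨n, hnIcc⟩⟩⟩ with hi0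
  set j0 : WDIndex B := ⟨⟨L, hB1⟩, ⟨⟨-k, hkIcc'⟩, ⟨-n, hnIcc'⟩⟩⟩ with hj0
  have hij : i0 ≠ j0 := by
    intro h
    have h2 := congrArg (fun x : WDIndex B => ((x.2.1 : ℤ), (x.2.2 : ℤ))) h
    simp only [hi0, hj0, Prod.mk.injEq] at h2
    apply hkn
    have : k = 0 ∧ n = 0 := by
      have e1 : k = -k := congrArg (fun x : WDIndex B => (x.2.1 : ℤ)) h
      have e2 : n = -n := congrArg (fun x : WDIndex B => (x.2.2 : ℤ)) h
      omega
    simp [this.1, this.2]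
  obtain ⟨ε, hε, hεd⟩ := wignerd_neg L k n
  set C : ℝ := Real.sqrt ((2 * (L : ℝ) + 1) / (8 * Real.pi ^ 2)) with hC
  set d : Fin m → ℝ := fun p => wignerd L k n (θ p) with hd
  set S : ℝ := ∑ p, C ^ 2 * d p ^ 2 with hS
  have hε2 : ε ^ 2 = 1 := by rw [← sq_abs, hε, one_pow]
  have hAi : ∀ p, A p i0 = wignerD L k n (θ p) (φ p) (χ p) := fun _ => rfl
  have hAj : ∀ p, A p j0 = wignerD L (-k) (-n) (θ p) (φ p) (χ p) := fun _ => rfl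
  have hSi : ∑ p, Complex.normSq (A p i0) = S := by
    refine Finset.sum_congr rfl fun p _ => ?_
    rw [hAi, normSq_wignerD]
  have hSj : ∑ p, Complex.normSq (A p j0) = S := by
    refine Finset.sum_congr rfl fun p _ => ?_
    rw [hAj, normSq_wignerD, hεd]
    have : (ε * wignerd L k n (θ p)) ^ 2 = ε ^ 2 * d p ^ 2 := by ring
    rw [this, hε2, one_mul]
  have hSpos : 0 < S := by
    obtain ⟨p, hp⟩ := hcols i0
    rw [← hSi]
    exact Finset.sum_pos' (fun _ _ => Complex.normSq_nonneg _)
      ⟨p, Finset.mem_univ p, Complex.normSq_pos.mpr hp⟩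
  set p0 : Fin m := ⟨0, hm⟩ with hp0
  set z : ℂ := Complex.exp (Complex.I * ((2 * (n:ℝ) * χ p0 + 2 * (k:ℝ) * φ p0 : ℝ) : ℂ)) with hz
  have hpt : ∀ p, (starRingEnd ℂ) (A p i0) * A p j0 =
      ((ε * (C ^ 2 * d p ^ 2) : ℝ) : ℂ) * z := by
    intro p
    rw [hAi, hAj, wignerD_eq, wignerD_eq, hεd]
    rw [map_mul, ← Complex.exp_conj]
    have hconj : (starRingEnd ℂ) (Complex.I *
        ((-((k:ℝ) * φ p + (n:ℝ) * χ p) : ℝ) : ℂ)) =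
        Complex.I * (((k:ℝ) * φ p + (n:ℝ) * χ p : ℝ) : ℂ) := by
      simp [map_mul, Complex.conj_ofReal]
      ring
    rw [hconj, Complex.conj_ofReal]
    obtain ⟨t, ht⟩ := hmod p p0
    have hexp : Complex.I * (((k:ℝ) * φ p + (n:ℝ) * χ p : ℝ) : ℂ) +
        Complex.I * ((-(((-k:ℤ):ℝ) * φ p + ((-n:ℤ):ℝ) * χ p) : ℝ) : ℂ) =
        Complex.I * ((2 * (n:ℝ) * χ p0 + 2 * (k:ℝ) * φ p0 : ℝ) : ℂ) +
          (t : ℂ) * (2 * (Real.pi : ℂ) * Complex.I) := by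
      have ht' := congrArg (Complex.ofReal) ht
      push_cast at ht' ⊢
      linear_combination Complex.I * ht'
    calc ((C * d p : ℝ) : ℂ) * Complex.exp (Complex.I * (((k:ℝ) * φ p + (n:ℝ) * χ p : ℝ) : ℂ)) *
          (((C * (ε * d p) : ℝ) : ℂ) *
            Complex.exp (Complex.I * ((-(((-k:ℤ):ℝ) * φ p + ((-n:ℤ):ℝ) * χ p) : ℝ) : ℂ)))
        = ((ε * (C ^ 2 * d p ^ 2) : ℝ) : ℂ) *
            Complex.exp (Complex.I * (((k:ℝ) * φ p + (n:ℝ) * χ p : ℝ) : ℂ) +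
              Complex.I * ((-(((-k:ℤ):ℝ) * φ p + ((-n:ℤ):ℝ) * χ p) : ℝ) : ℂ)) := by
          rw [Complex.exp_add]; push_cast; ring
      _ = ((ε * (C ^ 2 * d p ^ 2) : ℝ) : ℂ) * z := by
          rw [hexp, Complex.exp_add, Complex.exp_int_mul_two_pi_mul_I, mul_one]
  have hnum : ‖∑ p, (starRingEnd ℂ) (A p i0) * A p j0‖ = S := by
    have : ∑ p, (starRingEnd ℂ) (A p i0) * A p j0 = ((ε : ℂ) * z) * ((S : ℝ) : ℂ) := by
      rw [Finset.sum_congr rfl fun p _ => hpt p, ← Finset.sum_mul, hS]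
      push_cast
      rw [← Finset.mul_sum]
      ring
    have hzabs : ‖z‖ = 1 := by
      rw [hz, mul_comm, Complex.norm_exp_ofReal_mul_I]
    rw [this, norm_mul, norm_mul, Complex.norm_real, Complex.norm_real, Real.norm_eq_abs,
      Real.norm_eq_abs, hε, hzabs,
      abs_of_pos hSpos]
    ring
  have hmem : (1 : ℝ) ∈ {x : ℝ | ∃ i j : WDIndex B, i ≠ j ∧
      x = ‖∑ p, (starRingEnd ℂ) (A p i) * A p j‖ /
        (Real.sqrt (∑ p, Complex.normSq (A p i)) * Real.sqrt (∑ p, Complex.normSq (A p j)))} := by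
    refine ⟨i0, j0, hij, ?_⟩
    rw [hnum, hSi, hSj, Real.mul_self_sqrt hSpos.le, div_self hSpos.ne']
  have hub : ∀ x ∈ {x : ℝ | ∃ i j : WDIndex B, i ≠ j ∧
      x = ‖∑ p, (starRingEnd ℂ) (A p i) * A p j‖ /
        (Real.sqrt (∑ p, Complex.normSq (A p i)) * Real.sqrt (∑ p, Complex.normSq (A p j)))},
      x ≤ 1 := by
    rintro x ⟨i, j, hij', rfl⟩
    exact ratio_le_one (fun p => A p i) (fun p => A p j)
  rw [mutualCoherence]
  exact le_antisymm (Real.sSup_le hub zero_le_one) (le_csSup ⟨1, hub⟩ hmem)
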